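/- Let a_1,…,a_m, B, K be positive integers with ∑ a_i ≤ B·K, and set N = B·K and p_i = a_1 + … + a_i (p_0 = 0). Define a virtual line on vertices 1,…,N where the edge {j, j+1} has demand w_j = 1 if there exists i with p_{i−1} + 1 ≤ j and j + 1 ≤ p_{i−1} + a_i (i.e., j and j+1 lie in the same element section), and w_j = 0 otherwise; define a physical line on vertices 1,…,N where the edge {k, k+1} has cost t_k = 1 if B divides k and t_k = 0 otherwise. Then the indices {1,…,m} can be partitioned into K subsets each with ∑ a_i at most B if and only if there exists a bijection f : {1,…,N} → {1,…,N} with embedding cost ∑_{j=1}^{N−1} w_j · (∑_{k = min(f(j), f(j+1))}^{max(f(j), f(j+1)) − 1} t_k) = 0, equivalently such that ⌈f(j)/B⌉ = ⌈f(j+1)/B⌉ whenever w_j = 1. (This is the correctness of the reduction of bin packing to wVNE of a linear virtual network on a linear physical network.) -/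

import Mathlib

open Classical Finset

open Finset

lemma aux_block_le (B x y : ℕ) (hB : 1 ≤ B) (hx : 1 ≤ x) (hxy : x ≤ y) :
    (∑ k ∈ Finset.Ico x y, if B ∣ k then (1:ℕ) else 0) = 0 ↔ (x-1)/B = (y-1)/B := by
  rw [Finset.sum_eq_zero_iff]
  constructor
  · intro h
    refine le_antisymm (Nat.div_le_div_right (by omega)) ?_
    by_contra hlt
    push_neg at hlt
    set k := ((x-1)/B + 1) * B with hk
    have h1 : x - 1 < k :=
      (Nat.div_lt_iff_lt_mul (show 0 < B by omega)).mp (Nat.lt_succ_self ((x-1)/B))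
    have h2 : k ≤ y - 1 := by
      have h3 : (x-1)/B + 1 ≤ (y-1)/B := hlt
      calc k ≤ (y-1)/B * B := Nat.mul_le_mul_right B h3
      _ ≤ y - 1 := Nat.div_mul_le_self _ _
    have hmem : k ∈ Finset.Ico x y := by rw [Finset.mem_Ico]; omega
    have := h k hmem
    rw [if_pos (dvd_mul_left B _)] at this
    exact one_ne_zero this
  · intro hdiv k hk
    rw [Finset.mem_Ico] at hk
    rw [if_neg]
    rintro ⟨t, rfl⟩
    have hc : B * t = t * B := mul_comm B t
    have h1 : (x-1)/B < t := (Nat.div_lt_iff_lt_mul (show 0 < B by omega)).mpr (by omega)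
    have h2 : t ≤ (y-1)/B := (Nat.le_div_iff_mul_le (show 0 < B by omega)).mpr (by omega)
    omega

lemma aux_block (B x y : ℕ) (hB : 1 ≤ B) (hx : 1 ≤ x) (hy : 1 ≤ y) :
    (∑ k ∈ Finset.Ico (min x y) (max x y), if B ∣ k then (1:ℕ) else 0) = 0 ↔
      (x-1)/B = (y-1)/B := by
  rcases le_total x y with h | h
  · rw [min_eq_left h, max_eq_right h]; exact aux_block_le B x y hB hx h
  · rw [min_eq_right h, max_eq_left h, aux_block_le B y x hB hy h]; exact eq_comm
open Classical Finset

lemma aux_psucc (a : ℕ → ℕ) (i : ℕ) (hi : 1 ≤ i) :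
    ∑ l ∈ Finset.Icc 1 i, a l = (∑ l ∈ Finset.Icc 1 (i-1), a l) + a i := by
  obtain ⟨j, rfl⟩ : ∃ j, i = j + 1 := ⟨i-1, by omega⟩
  rw [Finset.sum_Icc_succ_top (by omega)]
  simp

lemma aux_pmono (a : ℕ → ℕ) {i j : ℕ} (h : i ≤ j) :
    (∑ l ∈ Finset.Icc 1 i, a l) ≤ ∑ l ∈ Finset.Icc 1 j, a l :=
  Finset.sum_le_sum_of_subset (Finset.Icc_subset_Icc_right h)

lemma aux_section (a : ℕ → ℕ) (m j : ℕ) (hj1 : 1 ≤ j)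
    (hjm : j ≤ ∑ l ∈ Finset.Icc 1 m, a l) :
    ∃ i, 1 ≤ i ∧ i ≤ m ∧ (∑ l ∈ Finset.Icc 1 (i-1), a l) < j ∧
      j ≤ ∑ l ∈ Finset.Icc 1 i, a l := by
  classical
  have hex : ∃ i, j ≤ ∑ l ∈ Finset.Icc 1 i, a l := ⟨m, hjm⟩
  set i0 := Nat.find hex with hi0
  have hspec : j ≤ ∑ l ∈ Finset.Icc 1 i0, a l := Nat.find_spec hex
  have hle : i0 ≤ m := Nat.find_min' hex hjm
  have h1 : 1 ≤ i0 := by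
    by_contra h
    have : i0 = 0 := by omega
    rw [this] at hspec
    simp at hspec
    omega
  have hmin : ¬ (j ≤ ∑ l ∈ Finset.Icc 1 (i0-1), a l) := Nat.find_min hex (by omega)
  exact ⟨i0, h1, hle, by omega, hspec⟩

lemma aux_section_unique (a : ℕ → ℕ) {j i i' : ℕ}
    (h1 : 1 ≤ i) (h2 : (∑ l ∈ Finset.Icc 1 (i-1), a l) < j)
    (h3 : j ≤ ∑ l ∈ Finset.Icc 1 i, a l)
    (h1' : 1 ≤ i') (h2' : (∑ l ∈ Finset.Icc 1 (i'-1), a l) < j)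
    (h3' : j ≤ ∑ l ∈ Finset.Icc 1 i', a l) : i = i' := by
  rcases lt_trichotomy i i' with h | h | h
  · have := aux_pmono a (show i ≤ i' - 1 by omega)
    omega
  · exact h
  · have := aux_pmono a (show i' ≤ i - 1 by omega)
    omega

lemma aux_block_val (B q r : ℕ) (hB : 1 ≤ B) (hr1 : 1 ≤ r) (hrB : r ≤ B) :
    (q * B + r - 1) / B = q := by
  have h1 : q * B + r - 1 = (r - 1) + B * q := by
    have := mul_comm q B; omega
  rw [h1, Nat.add_mul_div_left _ _ (show 0 < B by omega),
    Nat.div_eq_of_lt (by omega), Nat.zero_add]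

lemma aux_forward (m B K : ℕ) (hm : 1 ≤ m) (hB : 1 ≤ B) (hK : 1 ≤ K)
    (a : ℕ → ℕ) (ha : ∀ i ∈ Finset.Icc 1 m, 1 ≤ a i)
    (hsum : ∑ i ∈ Finset.Icc 1 m, a i ≤ B * K)
    (g : ℕ → ℕ) (hg1 : ∀ i ∈ Finset.Icc 1 m, g i ∈ Finset.Icc 1 K)
    (hg2 : ∀ k ∈ Finset.Icc 1 K,
      ∑ i ∈ (Finset.Icc 1 m).filter (fun i => g i = k), a i ≤ B) :
    ∃ f : ℕ → ℕ, Set.BijOn f (Set.Icc 1 (B * K)) (Set.Icc 1 (B * K)) ∧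
      ∑ j ∈ Finset.Icc 1 (B * K - 1),
        (if ∃ i ∈ Finset.Icc 1 m,
              (∑ l ∈ Finset.Icc 1 (i - 1), a l) + 1 ≤ j ∧
              j + 1 ≤ (∑ l ∈ Finset.Icc 1 (i - 1), a l) + a i
          then 1 else 0) *
        (∑ k ∈ Finset.Ico (min (f j) (f (j + 1))) (max (f j) (f (j + 1))),
          if B ∣ k then 1 else 0) = 0 := by
  classical
  set N := B * K with hN
  set p : ℕ → ℕ := fun i => ∑ l ∈ Finset.Icc 1 i, a l with hp
  have hpi : ∀ i, p i = ∑ l ∈ Finset.Icc 1 i, a l := fun _ => rfl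
  set o : ℕ → ℕ :=
    fun i => ∑ l ∈ (Finset.Icc 1 (i-1)).filter (fun l => g l = g i), a l with ho
  have hoi : ∀ i, 1 ≤ i → i ≤ m →
      o i + a i = ∑ l ∈ (Finset.Icc 1 i).filter (fun l => g l = g i), a l := by
    intro i h1 h2
    have hins : Finset.Icc 1 i = insert i (Finset.Icc 1 (i-1)) := by
      ext x; simp only [Finset.mem_Icc, Finset.mem_insert]; omega
    rw [hins, Finset.filter_insert, if_pos rfl, Finset.sum_insert
      (by simp only [Finset.mem_filter, Finset.mem_Icc]; omega)]
    exact (add_comm _ _)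
  have hcap : ∀ i, 1 ≤ i → i ≤ m → o i + a i ≤ B := by
    intro i h1 h2
    rw [hoi i h1 h2]
    calc ∑ l ∈ (Finset.Icc 1 i).filter (fun l => g l = g i), a l
        ≤ ∑ l ∈ (Finset.Icc 1 m).filter (fun l => g l = g i), a l :=
          Finset.sum_le_sum_of_subset
            (Finset.filter_subset_filter _ (Finset.Icc_subset_Icc_right h2))
      _ ≤ B := hg2 (g i) (hg1 i (Finset.mem_Icc.mpr ⟨h1, h2⟩))
  have homono : ∀ i i', 1 ≤ i → i < i' → i' ≤ m → g i = g i' → o i + a i ≤ o i' := by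
    intro i i' h1 h2 h3 hgg
    calc o i + a i = ∑ l ∈ (Finset.Icc 1 i).filter (fun l => g l = g i), a l :=
          hoi i h1 (by omega)
      _ = ∑ l ∈ (Finset.Icc 1 i).filter (fun l => g l = g i'), a l := by rw [hgg]
      _ ≤ ∑ l ∈ (Finset.Icc 1 (i'-1)).filter (fun l => g l = g i'), a l :=
          Finset.sum_le_sum_of_subset
            (Finset.filter_subset_filter _ (Finset.Icc_subset_Icc_right (by omega)))
      _ = o i' := rfl
  set f0 : ℕ → ℕ := fun j =>
    if h : ∃ i, 1 ≤ i ∧ i ≤ m ∧ p (i-1) < j ∧ j ≤ p i then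
      (g h.choose - 1) * B + o h.choose + (j - p (h.choose - 1))
    else j with hf0def
  have hf0 : ∀ i j, 1 ≤ i → i ≤ m → p (i-1) < j → j ≤ p i →
      f0 j = (g i - 1) * B + o i + (j - p (i-1)) := by
    intro i j h1 h2 h3 h4
    have hex : ∃ i, 1 ≤ i ∧ i ≤ m ∧ p (i-1) < j ∧ j ≤ p i := ⟨i, h1, h2, h3, h4⟩
    have hsp := hex.choose_spec
    have hch : hex.choose = i :=
      aux_section_unique a hsp.1 hsp.2.2.1 hsp.2.2.2 h1 h3 h4
    rw [hf0def]
    simp only [dif_pos hex]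
    rw [hch]
  have hgK : ∀ i, 1 ≤ i → i ≤ m → 1 ≤ g i ∧ g i ≤ K := by
    intro i h1 h2
    have := hg1 i (Finset.mem_Icc.mpr ⟨h1, h2⟩)
    rwa [Finset.mem_Icc] at this
  have hblockf0 : ∀ i j, 1 ≤ i → i ≤ m → p (i-1) < j → j ≤ p i →
      (f0 j - 1)/B = g i - 1 ∧ 1 ≤ f0 j ∧ f0 j ≤ N := by
    intro i j h1 h2 h3 h4
    rw [hf0 i j h1 h2 h3 h4]
    have hps := aux_psucc a i h1
    have e1 := hpi i; have e2 := hpi (i-1)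
    have hcapi := hcap i h1 h2
    have hr1 : 1 ≤ o i + (j - p (i-1)) := by omega
    have hrB : o i + (j - p (i-1)) ≤ B := by omega
    have hgi := hgK i h1 h2
    have hbv := aux_block_val B (g i - 1) (o i + (j - p (i-1))) hB hr1 hrB
    have hassoc : (g i - 1) * B + o i + (j - p (i-1)) =
        (g i - 1) * B + (o i + (j - p (i-1))) := by omega
    constructor
    · rw [hassoc]; exact hbv
    have hq1 : ((g i - 1) + 1) * B = (g i - 1) * B + B := by ring
    have hq2 : ((g i - 1) + 1) * B = g i * B := by
      congr 1; omega
    have hq3 : g i * B ≤ K * B := Nat.mul_le_mul_right B hgi.2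
    have hq4 : K * B = B * K := mul_comm K B
    constructor
    · omega
    · omega
  -- injectivity of f0 on [1, p m]
  have hinj0 : ∀ j j', 1 ≤ j → j ≤ p m → 1 ≤ j' → j' ≤ p m → f0 j = f0 j' → j = j' := by
    intro j j' hj1 hj2 hj1' hj2' heq
    obtain ⟨i, hi1, hi2, hi3, hi4⟩ := aux_section a m j hj1 (hpi m ▸ hj2)
    obtain ⟨i', hi1', hi2', hi3', hi4'⟩ := aux_section a m j' hj1' (hpi m ▸ hj2')
    have e1 := hpi i; have e2 := hpi (i-1); have e3 := hpi i'; have e4 := hpi (i'-1)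
    have hs3 : p (i-1) < j := by omega
    have hs4 : j ≤ p i := by omega
    have hs3' : p (i'-1) < j' := by omega
    have hs4' : j' ≤ p i' := by omega
    rw [hf0 i j hi1 hi2 hs3 hs4, hf0 i' j' hi1' hi2' hs3' hs4'] at heq
    have hps := aux_psucc a i hi1
    have hps' := aux_psucc a i' hi1'
    have hr1 : 1 ≤ o i + (j - p (i-1)) := by omega
    have hrB : o i + (j - p (i-1)) ≤ a i + o i := by omega
    have hr1' : 1 ≤ o i' + (j' - p (i'-1)) := by omega
    have hrB' : o i' + (j' - p (i'-1)) ≤ a i' + o i' := by omega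
    have hcapi := hcap i hi1 hi2
    have hcapi' := hcap i' hi1' hi2'
    have hb1 := aux_block_val B (g i - 1) (o i + (j - p (i-1))) hB hr1 (by omega)
    have hb2 := aux_block_val B (g i' - 1) (o i' + (j' - p (i'-1))) hB hr1' (by omega)
    have hgi := hgK i hi1 hi2
    have hgi' := hgK i' hi1' hi2'
    have hq : g i - 1 = g i' - 1 := by
      rw [← hb1, ← hb2]
      congr 1
      omega
    have hgg : g i = g i' := by omega
    have hBB : (g i - 1) * B = (g i' - 1) * B := by rw [hq]
    rcases lt_trichotomy i i' with h | h | h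
    · have := homono i i' hi1 h hi2' hgg
      omega
    · subst h; omega
    · have := homono i' i hi1' h hi2 hgg.symm
      omega
  have hpmN : p m ≤ N := by have := hpi m; omega
  set U := Finset.Icc 1 (p m) with hU
  set T := Finset.Icc 1 N with hT
  set V := U.image f0 with hV
  have hUT : U ⊆ T := Finset.Icc_subset_Icc_right hpmN
  have hf0mem : ∀ j, 1 ≤ j → j ≤ p m → 1 ≤ f0 j ∧ f0 j ≤ N := by
    intro j h1 h2
    obtain ⟨i, hi1, hi2, hi3, hi4⟩ := aux_section a m j h1 (hpi m ▸ h2)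
    have e1 := hpi i; have e2 := hpi (i-1)
    exact (hblockf0 i j hi1 hi2 (by omega) (by omega)).2
  have hVT : V ⊆ T := by
    intro y hy
    rw [hV, Finset.mem_image] at hy
    obtain ⟨j, hj, rfl⟩ := hy
    rw [hU, Finset.mem_Icc] at hj
    have := hf0mem j hj.1 hj.2
    rw [hT, Finset.mem_Icc]
    exact this
  have hinjU : Set.InjOn f0 ↑U := by
    intro x hx y hy hxy
    rw [Finset.mem_coe, hU, Finset.mem_Icc] at hx hy
    exact hinj0 x y hx.1 hx.2 hy.1 hy.2 hxy
  have hcard : (T \ U).card = (T \ V).card := by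
    rw [Finset.card_sdiff_of_subset hUT, Finset.card_sdiff_of_subset hVT,
      Finset.card_image_of_injOn hinjU]
  set e := Finset.equivOfCardEq hcard with he
  set f : ℕ → ℕ := fun j =>
    if hj : j ∈ T \ U then (e ⟨j, hj⟩ : ℕ) else f0 j with hfdef
  have hfU : ∀ j, 1 ≤ j → j ≤ p m → f j = f0 j := by
    intro j h1 h2
    rw [hfdef]
    simp only
    rw [dif_neg]
    rw [Finset.mem_sdiff]
    rintro ⟨-, hnot⟩
    exact hnot (by rw [hU, Finset.mem_Icc]; exact ⟨h1, h2⟩)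
  have hmapsTo : Set.MapsTo f (Set.Icc 1 N) (Set.Icc 1 N) := by
    intro j hj
    rw [Set.mem_Icc] at hj
    by_cases hjTU : j ∈ T \ U
    · rw [hfdef]; simp only [dif_pos hjTU]
      have h2 := (e ⟨j, hjTU⟩).2
      rw [Finset.mem_sdiff] at h2
      have h3 : (e ⟨j, hjTU⟩ : ℕ) ∈ Finset.Icc 1 N := h2.1
      rw [Finset.mem_Icc] at h3
      rw [Set.mem_Icc]
      exact h3
    · have hjU : j ∈ U := by
        by_contra hnot
        exact hjTU (Finset.mem_sdiff.mpr ⟨by rw [hT, Finset.mem_Icc]; exact hj, hnot⟩)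
      rw [hU, Finset.mem_Icc] at hjU
      rw [hfU j hjU.1 hjU.2, Set.mem_Icc]
      exact hf0mem j hjU.1 hjU.2
  have hinjOn : Set.InjOn f (Set.Icc 1 N) := by
    intro x hx y hy hxy
    rw [Set.mem_Icc] at hx hy
    have hxT : x ∈ T := by rw [hT, Finset.mem_Icc]; exact hx
    have hyT : y ∈ T := by rw [hT, Finset.mem_Icc]; exact hy
    by_cases hxU : x ∈ T \ U <;> by_cases hyU : y ∈ T \ U
    · rw [hfdef] at hxy
      simp only [dif_pos hxU, dif_pos hyU] at hxy
      have := e.injective (Subtype.ext hxy)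
      exact congrArg Subtype.val this
    · exfalso
      have hyU' : y ∈ U := by
        by_contra hnot; exact hyU (Finset.mem_sdiff.mpr ⟨hyT, hnot⟩)
      rw [hU, Finset.mem_Icc] at hyU'
      rw [hfdef] at hxy
      simp only [dif_pos hxU] at hxy
      rw [dif_neg hyU] at hxy
      have hmem1 := (e ⟨x, hxU⟩).2
      rw [Finset.mem_sdiff] at hmem1
      apply hmem1.2
      rw [hxy, hV]
      exact Finset.mem_image_of_mem f0 (by rw [hU, Finset.mem_Icc]; exact hyU')
    · exfalso
      have hxU' : x ∈ U := by
        by_contra hnot; exact hxU (Finset.mem_sdiff.mpr ⟨hxT, hnot⟩)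
      rw [hU, Finset.mem_Icc] at hxU'
      rw [hfdef] at hxy
      simp only [dif_pos hyU] at hxy
      rw [dif_neg hxU] at hxy
      have hmem1 := (e ⟨y, hyU⟩).2
      rw [Finset.mem_sdiff] at hmem1
      apply hmem1.2
      rw [← hxy, hV]
      exact Finset.mem_image_of_mem f0 (by rw [hU, Finset.mem_Icc]; exact hxU')
    · have hxU' : x ∈ U := by
        by_contra hnot; exact hxU (Finset.mem_sdiff.mpr ⟨hxT, hnot⟩)
      have hyU' : y ∈ U := by
        by_contra hnot; exact hyU (Finset.mem_sdiff.mpr ⟨hyT, hnot⟩)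
      rw [hU, Finset.mem_Icc] at hxU' hyU'
      rw [hfU x hxU'.1 hxU'.2, hfU y hyU'.1 hyU'.2] at hxy
      exact hinj0 x y hxU'.1 hxU'.2 hyU'.1 hyU'.2 hxy
  have hbij : Set.BijOn f (Set.Icc 1 N) (Set.Icc 1 N) :=
    ((Set.finite_Icc 1 N).injOn_iff_bijOn_of_mapsTo hmapsTo).mp hinjOn
  refine ⟨f, hbij, ?_⟩
  apply Finset.sum_eq_zero
  intro j hj
  rw [Finset.mem_Icc] at hj
  by_cases hw : ∃ i ∈ Finset.Icc 1 m,
      (∑ l ∈ Finset.Icc 1 (i - 1), a l) + 1 ≤ j ∧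
      j + 1 ≤ (∑ l ∈ Finset.Icc 1 (i - 1), a l) + a i
  · rw [if_pos hw, one_mul]
    obtain ⟨i, him, h1, h2⟩ := hw
    rw [Finset.mem_Icc] at him
    have hps := aux_psucc a i him.1
    have e1 := hpi i; have e2 := hpi (i-1); have e3 := hpi m
    have hpmm := aux_pmono a him.2
    have hjb : 1 ≤ j ∧ j ≤ p m := by omega
    have hjb1 : 1 ≤ j + 1 ∧ j + 1 ≤ p m := by omega
    have b1 := hblockf0 i j him.1 him.2 (by omega) (by omega)
    have b2 := hblockf0 i (j+1) him.1 him.2 (by omega) (by omega)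
    rw [hfU j hjb.1 hjb.2, hfU (j+1) hjb1.1 hjb1.2]
    exact (aux_block B (f0 j) (f0 (j+1)) hB b1.2.1 b2.2.1).mpr (by rw [b1.1, b2.1])
  · rw [if_neg hw, zero_mul]

lemma aux_backward (m B K : ℕ) (hm : 1 ≤ m) (hB : 1 ≤ B) (hK : 1 ≤ K)
    (a : ℕ → ℕ) (ha : ∀ i ∈ Finset.Icc 1 m, 1 ≤ a i)
    (hsum : ∑ i ∈ Finset.Icc 1 m, a i ≤ B * K)
    (f : ℕ → ℕ) (hf : Set.BijOn f (Set.Icc 1 (B * K)) (Set.Icc 1 (B * K)))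
    (hcost : ∑ j ∈ Finset.Icc 1 (B * K - 1),
        (if ∃ i ∈ Finset.Icc 1 m,
              (∑ l ∈ Finset.Icc 1 (i - 1), a l) + 1 ≤ j ∧
              j + 1 ≤ (∑ l ∈ Finset.Icc 1 (i - 1), a l) + a i
          then 1 else 0) *
        (∑ k ∈ Finset.Ico (min (f j) (f (j + 1))) (max (f j) (f (j + 1))),
          if B ∣ k then 1 else 0) = 0) :
    ∃ g : ℕ → ℕ, (∀ i ∈ Finset.Icc 1 m, g i ∈ Finset.Icc 1 K) ∧
        ∀ k ∈ Finset.Icc 1 K,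
          ∑ i ∈ (Finset.Icc 1 m).filter (fun i => g i = k), a i ≤ B := by
  classical
  set N := B * K with hN
  set p : ℕ → ℕ := fun i => ∑ l ∈ Finset.Icc 1 i, a l with hp
  have hpi : ∀ i, p i = ∑ l ∈ Finset.Icc 1 i, a l := fun _ => rfl
  have hNpos : 1 ≤ N := by rw [hN]; exact Nat.one_le_iff_ne_zero.mpr (by positivity)
  have hpm : p m ≤ N := hsum
  -- membership facts
  have hmem : ∀ x, 1 ≤ x → x ≤ N → 1 ≤ f x ∧ f x ≤ N := by
    intro x h1 h2
    have := hf.mapsTo (show x ∈ Set.Icc 1 N by rw [Set.mem_Icc]; exact ⟨h1, h2⟩)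
    rwa [Set.mem_Icc] at this
  -- every term of the cost sum is zero
  have hterm := Finset.sum_eq_zero_iff.mp hcost
  -- consecutive positions in a common section map to the same block
  have hblock : ∀ i j, 1 ≤ i → i ≤ m → p (i-1) < j → j + 1 ≤ p i →
      (f j - 1)/B = (f (j+1) - 1)/B := by
    intro i j hi1 hi2 hj1 hj2
    have hps := aux_psucc a i hi1
    have e1 := hpi i; have e2 := hpi (i-1); have e3 := hpi m
    have hjN : j ∈ Finset.Icc 1 (N-1) := by
      rw [Finset.mem_Icc]
      have := aux_pmono a hi2
      constructor <;> omega
    have h0 := hterm j hjN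
    rw [if_pos ⟨i, Finset.mem_Icc.mpr ⟨hi1, hi2⟩, by omega, by omega⟩, one_mul] at h0
    have hpmm := aux_pmono a hi2
    have hfj := hmem j (by omega) (by omega)
    have hfj1 := hmem (j+1) (by omega) (by omega)
    exact (aux_block B (f j) (f (j+1)) hB hfj.1 hfj1.1).mp h0
  -- all positions of a section map to the block of its first position
  have hchain : ∀ i, 1 ≤ i → i ≤ m → ∀ j, p (i-1) < j → j ≤ p i →
      (f j - 1)/B = (f (p (i-1) + 1) - 1)/B := by
    intro i hi1 hi2 j hj1 hj2
    obtain ⟨d, rfl⟩ : ∃ d, j = p (i-1) + 1 + d := ⟨j - p (i-1) - 1, by omega⟩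
    clear hj1
    induction d with
    | zero => rfl
    | succ n ih =>
      have h1 := ih (by omega)
      have h2 := hblock i (p (i-1) + 1 + n) hi1 hi2 (by omega) (by omega)
      rw [show p (i-1) + 1 + (n+1) = (p (i-1) + 1 + n) + 1 from rfl, ← h2, h1]
  refine ⟨fun i => (f (p (i-1) + 1) - 1)/B + 1, ?_, ?_⟩
  · intro i hi
    dsimp only
    rw [Finset.mem_Icc] at hi ⊢
    have hps := aux_psucc a i hi.1
    have hai := ha i (Finset.mem_Icc.mpr hi)
    have hpmm := aux_pmono a hi.2
    have e1 := hpi i; have e2 := hpi (i-1); have e3 := hpi m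
    have hfx := hmem (p (i-1) + 1) (by omega) (by omega)
    have : (f (p (i-1) + 1) - 1)/B < K :=
      (Nat.div_lt_iff_lt_mul (show 0 < B by omega)).mpr
        (by have := mul_comm K B; omega)
    exact ⟨Nat.le_add_left 1 _, Nat.succ_le_of_lt this⟩
  · intro k hk
    simp only
    rw [Finset.mem_Icc] at hk
    set S := (Finset.Icc 1 m).filter
      (fun i => (f (p (i-1) + 1) - 1)/B + 1 = k) with hS
    set t : ℕ → Finset ℕ := fun i => Finset.Ioc (p (i-1)) (p i) with ht
    have hcards : ∀ i ∈ S, (t i).card = a i := by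
      intro i hi
      rw [hS, Finset.mem_filter, Finset.mem_Icc] at hi
      rw [ht]
      simp only [Nat.card_Ioc]
      have := aux_psucc a i hi.1.1
      have e1 := hpi i; have e2 := hpi (i-1)
      omega
    have hdisj : ∀ x ∈ S, ∀ y ∈ S, x ≠ y → Disjoint (t x) (t y) := by
      intro x hx y hy hxy
      rw [hS, Finset.mem_filter, Finset.mem_Icc] at hx hy
      rw [Finset.disjoint_left]
      intro z hz hz'
      rw [ht, Finset.mem_Ioc] at hz hz'
      have e1 := hpi x; have e2 := hpi (x-1); have e3 := hpi y; have e4 := hpi (y-1)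
      rcases lt_or_gt_of_ne hxy with h | h
      · have := aux_pmono a (show x ≤ y - 1 by omega); omega
      · have := aux_pmono a (show y ≤ x - 1 by omega); omega
    -- the union of the sections of S
    have hsub : ∀ j ∈ S.biUnion t, 1 ≤ j ∧ j ≤ N := by
      intro j hj
      rw [Finset.mem_biUnion] at hj
      obtain ⟨i, hi, hji⟩ := hj
      rw [hS, Finset.mem_filter, Finset.mem_Icc] at hi
      rw [ht, Finset.mem_Ioc] at hji
      have := aux_pmono a hi.1.2
      have e1 := hpi i; have e2 := hpi (i-1); have e3 := hpi m
      omega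
    have himg : ∀ j ∈ S.biUnion t,
        f j ∈ Finset.Icc ((k-1)*B + 1) ((k-1)*B + B) := by
      intro j hj
      rw [Finset.mem_biUnion] at hj
      obtain ⟨i, hi, hji⟩ := hj
      rw [hS, Finset.mem_filter, Finset.mem_Icc] at hi
      rw [ht, Finset.mem_Ioc] at hji
      have hj1 := hsub j (Finset.mem_biUnion.mpr ⟨i, by
        rw [hS, Finset.mem_filter, Finset.mem_Icc]; exact hi, by
        rw [ht, Finset.mem_Ioc]; exact hji⟩)
      have hc := hchain i hi.1.1 hi.1.2 j hji.1 hji.2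
      have hfj := hmem j hj1.1 hj1.2
      have hbk : (f j - 1)/B = k - 1 := by rw [hc]; omega
      have h1 : (f j - 1)/B * B ≤ f j - 1 := Nat.div_mul_le_self _ _
      have h2 : f j - 1 < ((f j - 1)/B + 1) * B :=
        (Nat.div_lt_iff_lt_mul (show 0 < B by omega)).mp (Nat.lt_succ_self _)
      rw [hbk] at h1 h2
      have h3 : (k - 1 + 1) * B = (k-1)*B + B := by ring
      rw [Finset.mem_Icc]
      omega
    have hinj : Set.InjOn f ↑(S.biUnion t) := by
      apply hf.injOn.mono
      intro j hj
      rw [Finset.mem_coe] at hj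
      have := hsub j hj
      rw [Set.mem_Icc]
      omega
    calc ∑ i ∈ S, a i = ∑ i ∈ S, (t i).card := Finset.sum_congr rfl
            (fun i hi => (hcards i hi).symm)
      _ = (S.biUnion t).card := (Finset.card_biUnion hdisj).symm
      _ = ((S.biUnion t).image f).card := (Finset.card_image_of_injOn hinj).symm
      _ ≤ (Finset.Icc ((k-1)*B + 1) ((k-1)*B + B)).card := by
            apply Finset.card_le_card
            intro y hy
            rw [Finset.mem_image] at hy
            obtain ⟨j, hj, rfl⟩ := hy
            exact himg j hj
      _ = B := by rw [Nat.card_Icc]; omega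

/-- Correctness of the reduction of bin packing to wVNE of a linear
virtual network on a linear physical network.  Vertices are `1,…,N` with `N = B·K`;
the virtual edge `{j, j+1}` has demand `1` iff `j` and `j+1` lie in the same element
section, and the physical edge `{k, k+1}` has cost `1` iff `B ∣ k`.  The instance of
bin packing is solvable iff there is a bijection of `{1,…,N}` of embedding cost `0`. -/
theorem binPacking_iff_line_on_line_wVNE (m B K : ℕ) (hm : 1 ≤ m) (hB : 1 ≤ B)
    (hK : 1 ≤ K) (a : ℕ → ℕ) (ha : ∀ i ∈ Finset.Icc 1 m, 1 ≤ a i)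
    (hsum : ∑ i ∈ Finset.Icc 1 m, a i ≤ B * K) :
    (∃ g : ℕ → ℕ, (∀ i ∈ Finset.Icc 1 m, g i ∈ Finset.Icc 1 K) ∧
        ∀ k ∈ Finset.Icc 1 K,
          ∑ i ∈ (Finset.Icc 1 m).filter (fun i => g i = k), a i ≤ B) ↔
    (∃ f : ℕ → ℕ, Set.BijOn f (Set.Icc 1 (B * K)) (Set.Icc 1 (B * K)) ∧
      ∑ j ∈ Finset.Icc 1 (B * K - 1),
        (if ∃ i ∈ Finset.Icc 1 m,
              (∑ l ∈ Finset.Icc 1 (i - 1), a l) + 1 ≤ j ∧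
              j + 1 ≤ (∑ l ∈ Finset.Icc 1 (i - 1), a l) + a i
          then 1 else 0) *
        (∑ k ∈ Finset.Ico (min (f j) (f (j + 1))) (max (f j) (f (j + 1))),
          if B ∣ k then 1 else 0) = 0) := by
  constructor
  · rintro ⟨g, hg1, hg2⟩
    exact aux_forward m B K hm hB hK a ha hsum g hg1 hg2
  · rintro ⟨f, hf, hcost⟩
    exact aux_backward m B K hm hB hK a ha hsum f hf hcost
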